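/- If s is a partial outmap of the n-hypercube with exactly two known vertices u ≠ v, and u, v do not clash, then s is completable to a USO. Consequently, every 2-certificate consists of two vertices that clash. -/
import Mathlib


/-- `s` is the outmap of a unique sink orientation (Szabó–Welzl criterion). -/
def IsUSO {ι : Type*} (s : (ι → Bool) → (ι → Bool)) : Prop :=
  ∀ u v : ι → Bool, u ≠ v → ∃ i, u i ≠ v i ∧ s u i ≠ s v i

/-- The set of known vertices of a partial outmap. -/
def Known {n : ℕ} (s : (Fin n → Bool) → Option (Fin n → Bool)) :
    Finset (Fin n → Bool) :=
  Finset.univ.filter (fun u => (s u).isSome)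

/-- A partial outmap is completable if some USO outmap agrees with it on all
known vertices. -/
def Completable {n : ℕ} (s : (Fin n → Bool) → Option (Fin n → Bool)) : Prop :=
  ∃ t : (Fin n → Bool) → (Fin n → Bool), IsUSO t ∧ ∀ u a, s u = some a → t u = a

/-- Two known vertices of a partial outmap clash. -/
def ClashAt {n : ℕ} (s : (Fin n → Bool) → Option (Fin n → Bool))
    (u v : Fin n → Bool) : Prop :=
  u ≠ v ∧ ∃ a b, s u = some a ∧ s v = some b ∧ ∀ i, u i ≠ v i → a i = b i

/-- Restriction of a partial outmap to a subset `P` of its known vertices. -/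
def restrictPO {n : ℕ} (s : (Fin n → Bool) → Option (Fin n → Bool))
    (P : Finset (Fin n → Bool)) : (Fin n → Bool) → Option (Fin n → Bool) :=
  fun u => if u ∈ P then s u else none

/-- A `k`-certificate: a non-completable partial outmap with `k` known
vertices all of whose proper restrictions are completable. -/
def IsCertificate {n : ℕ} (k : ℕ)
    (s : (Fin n → Bool) → Option (Fin n → Bool)) : Prop :=
  (Known s).card = k ∧ ¬ Completable s ∧
    ∀ P ⊂ Known s, Completable (restrictPO s P)

/-- A partial outmap with exactly two known, non-clashing vertices is
completable; consequently every 2-certificate consists of a clashing pair. -/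
theorem stmt15 (n : ℕ) :
    (∀ s : (Fin n → Bool) → Option (Fin n → Bool), ∀ u v : Fin n → Bool,
      u ≠ v → Known s = {u, v} → ¬ ClashAt s u v → Completable s) ∧
    (∀ s : (Fin n → Bool) → Option (Fin n → Bool), IsCertificate 2 s →
      ∃ u v, u ∈ Known s ∧ v ∈ Known s ∧ ClashAt s u v) := by
  have main : ∀ s : (Fin n → Bool) → Option (Fin n → Bool), ∀ u v : Fin n → Bool,
      u ≠ v → Known s = {u, v} → ¬ ClashAt s u v → Completable s := by
    intro s u v huv hK hncl
    have hu : u ∈ Known s := by rw [hK]; simp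
    have hv : v ∈ Known s := by rw [hK]; simp
    simp only [Known, Finset.mem_filter, Finset.mem_univ, true_and] at hu hv
    obtain ⟨a, ha⟩ := Option.isSome_iff_exists.mp hu
    obtain ⟨b, hb⟩ := Option.isSome_iff_exists.mp hv
    have hex : ∃ i, u i ≠ v i ∧ a i ≠ b i := by
      by_contra h
      push_neg at h
      exact hncl ⟨huv, a, b, ha, hb, fun i hi => h i hi⟩
    obtain ⟨i, hi, hab⟩ := hex
    refine ⟨fun w j => xor (w j)
      (if w i = u i then xor (u j) (a j) else xor (v j) (b j)), ?_, ?_⟩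
    · intro w z hwz
      by_cases h : w i = z i
      · obtain ⟨j, hj⟩ := Function.ne_iff.mp hwz
        refine ⟨j, hj, ?_⟩
        simp only [h]
        intro he
        apply hj
        revert he
        cases (if z i = u i then xor (u j) (a j) else xor (v j) (b j)) <;> simp
      · refine ⟨i, h, ?_⟩
        simp only []
        revert hi hab h
        cases hui : u i <;> cases hvi : v i <;> cases hwi : w i <;>
          cases hzi : z i <;> cases hai : a i <;> cases hbi : b i <;> simp_all
    · intro w x hwx
      have hwK : w ∈ Known s := by
        simp only [Known, Finset.mem_filter, Finset.mem_univ, true_and, hwx,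
          Option.isSome_some]
      rw [hK] at hwK
      simp only [Finset.mem_insert, Finset.mem_singleton] at hwK
      rcases hwK with rfl | rfl
      · rw [ha, Option.some_inj] at hwx
        subst hwx
        funext j
        beta_reduce
        rw [if_pos rfl, ← Bool.xor_assoc, Bool.xor_self, Bool.false_xor]
      · rw [hb, Option.some_inj] at hwx
        subst hwx
        funext j
        beta_reduce
        rw [if_neg (Ne.symm hi), ← Bool.xor_assoc, Bool.xor_self, Bool.false_xor]
  refine ⟨main, ?_⟩
  intro s hs
  obtain ⟨hcard, hnc, -⟩ := hs
  obtain ⟨u, v, huv, hK⟩ := Finset.card_eq_two.mp hcard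
  refine ⟨u, v, by rw [hK]; simp, by rw [hK]; simp, ?_⟩
  by_contra hncl
  exact hnc (main s u v huv hK hncl)
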